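/- For all positive integers k and n, ∑_{j=1}^{k} (2πi·n)^{-2j} · ζ(2j) / (2k-2j)! = ((2πn)^{-2k} / (2·(2k)!)) · ∫₀¹ ( -2(2πn)^{2k} + (2πn - i·log u)^{2k} + (2πn + i·log u)^{2k} ) / (1-u)² du, where the integral is over u ∈ (0,1) and i is the imaginary unit. -/

import Mathlib

open Real Complex Finset MeasureTheory Set

namespace SumZetaAux

lemma exp_neg_image : (fun x : ℝ => Real.exp (-x)) '' Set.Ioi 0 = Set.Ioo 0 1 := by
  ext u
  constructor
  · rintro ⟨x, hx, rfl⟩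
    refine ⟨Real.exp_pos _, ?_⟩
    rw [Real.exp_lt_one_iff]
    simpa using hx
  · rintro ⟨h0, h1⟩
    exact ⟨-Real.log u, by simpa using Real.log_neg h0 h1, by simp [Real.exp_log h0]⟩

lemma hasDeriv_exp_neg (x : ℝ) (s : Set ℝ) :
    HasDerivWithinAt (fun x : ℝ => Real.exp (-x)) (-Real.exp (-x)) s x := by
  simpa [Function.comp_def] using ((Real.hasDerivAt_exp (-x)).comp x ((hasDerivAt_id x).neg)).hasDerivWithinAt

lemma injOn_exp_neg : Set.InjOn (fun x : ℝ => Real.exp (-x)) (Set.Ioi 0) := by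
  intro a _ b _ h
  simpa using Real.exp_injective h

lemma pointwise_eq (m r : ℕ) : ∀ x ∈ Set.Ioi (0:ℝ),
    x ^ (r:ℝ) * Real.exp (-((m:ℝ)+1) * x ^ (1:ℝ)) = Real.exp (-x) * (Real.exp (-x)) ^ m * x ^ r := by
  intro x hx
  rw [Real.rpow_one, Real.rpow_natCast, ← Real.exp_nat_mul, ← Real.exp_add]
  ring_nf

lemma integrableOn_pow_exp (r m : ℕ) :
    IntegrableOn (fun x : ℝ => Real.exp (-x) * (Real.exp (-x)) ^ m * x ^ r) (Set.Ioi 0) := by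
  have h := integrableOn_rpow_mul_exp_neg_mul_rpow (p := 1) (s := r) (b := (m:ℝ) + 1)
    (lt_of_lt_of_le neg_one_lt_zero (Nat.cast_nonneg r)) zero_lt_one (by positivity)
  exact h.congr_fun (pointwise_eq m r) measurableSet_Ioi

lemma integral_pow_exp (r m : ℕ) :
    ∫ x in Set.Ioi (0:ℝ), Real.exp (-x) * (Real.exp (-x)) ^ m * x ^ r
      = (Nat.factorial r : ℝ) / ((m:ℝ) + 1) ^ (r + 1) := by
  have h := _root_.integral_rpow_mul_exp_neg_mul_rpow (p := 1) (q := r) (b := (m:ℝ) + 1)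
    (by norm_num) (lt_of_lt_of_le neg_one_lt_zero (Nat.cast_nonneg r)) (by positivity)
  rw [← setIntegral_congr_fun measurableSet_Ioi (pointwise_eq m r), h]
  rw [show ((r:ℝ) + 1)/1 = ((r:ℝ)+1) by ring, show (r:ℝ) + 1 = ((r:ℕ):ℝ) + 1 by norm_num,
    Real.Gamma_nat_eq_factorial]
  rw [show (-(((r:ℕ):ℝ) + 1))/1 = -((r+1:ℕ):ℝ) by push_cast; ring]
  rw [Real.rpow_neg (by positivity), Real.rpow_natCast]
  field_simp

lemma integrableOn_pow_mul_log (m r : ℕ) :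
    IntegrableOn (fun u : ℝ => u ^ m * (-Real.log u) ^ r) (Set.Ioo 0 1) := by
  rw [← exp_neg_image,
    integrableOn_image_iff_integrableOn_abs_deriv_smul measurableSet_Ioi
      (fun x _ => hasDeriv_exp_neg x _) injOn_exp_neg]
  apply (integrableOn_pow_exp r m).congr_fun ?_ measurableSet_Ioi
  intro x hx
  simp [abs_of_pos (Real.exp_pos (-x)), Real.log_exp, mul_assoc]

lemma integral_pow_mul_log (m r : ℕ) :
    ∫ u in Set.Ioo (0:ℝ) 1, u ^ m * (-Real.log u) ^ r
      = (Nat.factorial r : ℝ) / ((m:ℝ) + 1) ^ (r + 1) := by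
  rw [← exp_neg_image,
    integral_image_eq_integral_abs_deriv_smul measurableSet_Ioi
      (fun x _ => hasDeriv_exp_neg x _) injOn_exp_neg]
  rw [← integral_pow_exp r m]
  apply setIntegral_congr_fun measurableSet_Ioi
  intro x hx
  simp [abs_of_pos (Real.exp_pos (-x)), Real.log_exp, mul_assoc]

noncomputable def ff (r m : ℕ) (u : ℝ) : ℝ := ((m:ℝ) + 1) * (u ^ m * (-Real.log u) ^ r)
noncomputable def gg (r : ℕ) (u : ℝ) : ℝ := (-Real.log u) ^ r / (1 - u) ^ 2
noncomputable def cc (r m : ℕ) : ℝ := (Nat.factorial r : ℝ) / ((m:ℝ) + 1) ^ r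

variable (r : ℕ)

lemma ff_int (m : ℕ) : IntegrableOn (ff r m) (Set.Ioo (0:ℝ) 1) :=
  (integrableOn_pow_mul_log m r).const_mul _

lemma ff_integral (m : ℕ) : ∫ u in Set.Ioo (0:ℝ) 1, ff r m u = cc r m := by
  unfold ff cc
  rw [MeasureTheory.integral_const_mul, integral_pow_mul_log m r]
  have : ((m:ℝ)+1) ^ (r+1) = ((m:ℝ)+1)^r * ((m:ℝ)+1) := by ring
  rw [this]
  have h : ((m:ℝ)+1) ≠ 0 := by positivity
  have h2 : ((m:ℝ)+1)^r ≠ 0 := by positivity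
  field_simp

lemma cc_summable (hr : 1 < r) : Summable (cc r) := by
  have : Summable (fun n : ℕ => 1 / ((n:ℝ)) ^ r) := Real.summable_one_div_nat_pow.mpr hr
  have h2 := ((summable_nat_add_iff 1).mpr this).mul_left (Nat.factorial r : ℝ)
  apply h2.congr
  intro m
  unfold cc
  push_cast
  ring

lemma ff_hasSum {u : ℝ} (hu : u ∈ Set.Ioo (0:ℝ) 1) : HasSum (fun m => ff r m u) (gg r u) := by
  have hnorm : ‖u‖ < 1 := by rw [Real.norm_eq_abs, abs_of_pos hu.1]; exact hu.2
  have h := hasSum_choose_mul_geometric_of_norm_lt_one 1 hnorm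
  have h2 := h.mul_right ((-Real.log u) ^ r)
  have hfun : (fun m => ff r m u) = fun i => ((i+1).choose 1 : ℝ) * u ^ i * (-Real.log u) ^ r :=
    funext fun m => by unfold ff; rw [Nat.choose_one_right]; push_cast; ring
  have hgg : gg r u = 1 / (1 - u) ^ (1+1) * (-Real.log u) ^ r := by
    unfold gg; norm_num; ring
  rw [hfun, hgg]
  exact h2

lemma ff_nonneg {u : ℝ} (hu : u ∈ Set.Ioo (0:ℝ) 1) (m : ℕ) : 0 ≤ ff r m u := by
  have h1 : 0 ≤ -Real.log u := by
    have := Real.log_neg hu.1 hu.2; linarith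
  have hu0 : (0:ℝ) ≤ u := hu.1.le
  unfold ff
  positivity

lemma ff_meas (m : ℕ) : Measurable (ff r m) := by
  unfold ff
  exact measurable_const.mul ((measurable_id.pow_const m).mul ((Real.measurable_log.neg).pow_const r))

lemma gg_meas : Measurable (gg r) := by
  unfold gg
  exact ((Real.measurable_log.neg).pow_const r).div ((measurable_const.sub measurable_id).pow_const 2)

lemma lint_ff (m : ℕ) :
    ∫⁻ u in Set.Ioo (0:ℝ) 1, ENNReal.ofReal (ff r m u) = ENNReal.ofReal (cc r m) := by
  rw [← ofReal_integral_eq_lintegral_ofReal (ff_int r m)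
    (((ae_restrict_iff' measurableSet_Ioo).mpr (ae_of_all _ fun u hu => ff_nonneg r hu m))),
    ff_integral]

lemma lint_gg (hr : 1 < r) :
    ∫⁻ u in Set.Ioo (0:ℝ) 1, ENNReal.ofReal (gg r u)
      = ENNReal.ofReal ((Nat.factorial r : ℝ) * ∑' m : ℕ, 1 / ((m:ℝ) + 1) ^ r) := by
  have hpt : ∀ u ∈ Set.Ioo (0:ℝ) 1,
      ENNReal.ofReal (gg r u) = ∑' m, ENNReal.ofReal (ff r m u) := by
    intro u hu
    rw [← (ff_hasSum r hu).tsum_eq,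
      ENNReal.ofReal_tsum_of_nonneg (ff_nonneg r hu) (ff_hasSum r hu).summable]
  rw [setLIntegral_congr_fun measurableSet_Ioo hpt]
  rw [lintegral_tsum (fun m => ((ff_meas r m).ennreal_ofReal).aemeasurable)]
  simp_rw [lint_ff r]
  rw [← ENNReal.ofReal_tsum_of_nonneg (fun m => by unfold cc; positivity) (cc_summable r hr)]
  congr 1
  rw [← tsum_mul_left]
  exact tsum_congr fun m => by unfold cc; ring

lemma gg_integrableOn (hr : 1 < r) : IntegrableOn (gg r) (Set.Ioo (0:ℝ) 1) := by
  refine ⟨(gg_meas r).aestronglyMeasurable, ?_⟩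
  rw [hasFiniteIntegral_iff_ofReal
    ((ae_restrict_iff' measurableSet_Ioo).mpr (ae_of_all _ fun u hu => by
      have h1 : 0 ≤ -Real.log u := by have := Real.log_neg hu.1 hu.2; linarith
      unfold gg; positivity))]
  rw [lint_gg r hr]
  exact ENNReal.ofReal_lt_top

lemma gg_integral (hr : 1 < r) :
    ∫ u in Set.Ioo (0:ℝ) 1, gg r u
      = (Nat.factorial r : ℝ) * ∑' m : ℕ, 1 / ((m:ℝ) + 1) ^ r := by
  rw [integral_eq_lintegral_of_nonneg_ae
    ((ae_restrict_iff' measurableSet_Ioo).mpr (ae_of_all _ fun u hu => by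
      have h1 : 0 ≤ -Real.log u := by have := Real.log_neg hu.1 hu.2; linarith
      unfold gg; positivity))
    (gg_meas r).aestronglyMeasurable]
  rw [lint_gg r hr, ENNReal.toReal_ofReal]
  have : 0 ≤ ∑' m : ℕ, 1 / ((m:ℝ) + 1) ^ r := tsum_nonneg (fun m => by positivity)
  positivity

lemma binom_even (k : ℕ) (A x : ℂ) :
    -2 * A ^ (2*k) + (A - x) ^ (2*k) + (A + x) ^ (2*k)
      = ∑ r ∈ Finset.Icc 1 k, 2 * (Nat.choose (2*k) (2*r) : ℂ) * A ^ (2*k - 2*r) * x ^ (2*r) := by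
  have h1 : (A + x) ^ (2*k) = ∑ i ∈ Finset.range (2*k+1), x ^ i * A ^ (2*k - i) * (Nat.choose (2*k) i : ℂ) := by
    rw [add_comm A x, add_pow]
  have h2 : (A - x) ^ (2*k) = ∑ i ∈ Finset.range (2*k+1), (-x) ^ i * A ^ (2*k - i) * (Nat.choose (2*k) i : ℂ) := by
    rw [sub_eq_add_neg, add_comm A (-x), add_pow]
  set h : ℕ → ℂ := fun i => (x ^ i + (-x) ^ i) * A ^ (2*k - i) * (Nat.choose (2*k) i : ℂ) with hh
  have hsum : (A - x) ^ (2*k) + (A + x) ^ (2*k) = ∑ i ∈ Finset.range (2*k+1), h i := by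
    rw [h1, h2, ← Finset.sum_add_distrib]
    exact Finset.sum_congr rfl fun i _ => by simp only [hh]; ring
  have hfilter : ∑ i ∈ Finset.range (2*k+1), h i
      = ∑ i ∈ (Finset.range (2*k+1)).filter (fun i => Even i), h i := by
    symm
    apply Finset.sum_filter_of_ne
    intro i _ hne
    by_contra hodd
    apply hne
    have : (-x) ^ i = -(x ^ i) := (Nat.not_even_iff_odd.mp hodd).neg_pow x
    simp [hh, this]
  have himg : (Finset.range (2*k+1)).filter (fun i => Even i) = (Finset.range (k+1)).image (fun r => 2*r) := by
    ext i
    simp only [Finset.mem_filter, Finset.mem_range, Finset.mem_image, Nat.even_iff]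
    constructor
    · rintro ⟨hi1, hi2⟩
      exact ⟨i / 2, by omega, by omega⟩
    · rintro ⟨r, hr, rfl⟩
      omega
  have hinj : Set.InjOn (fun r => 2*r) (Finset.range (k+1)) := fun a _ b _ hab => by dsimp at hab; omega
  have heven : ∀ r, h (2*r) = 2 * (Nat.choose (2*k) (2*r) : ℂ) * A ^ (2*k - 2*r) * x ^ (2*r) := by
    intro r
    have : (-x) ^ (2*r) = x ^ (2*r) := Even.neg_pow ⟨r, by omega⟩ x
    simp only [hh, this]
    ring
  have hins : Finset.range (k+1) = insert 0 (Finset.Icc 1 k) := by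
    ext i; simp [Finset.mem_insert, Finset.mem_Icc]; omega
  rw [add_assoc, hsum, hfilter, himg, Finset.sum_image hinj, hins,
    Finset.sum_insert (by simp)]
  simp only [heven]
  rw [show 2 * (Nat.choose (2*k) (2*0) : ℂ) * A ^ (2*k - 2*0) * x ^ (2*0) = 2 * A ^ (2*k) by
    simp only [Nat.mul_zero, Nat.choose_zero_right, Nat.cast_one, Nat.sub_zero, pow_zero]
    ring]
  ring

lemma zeta_eq (j : ℕ) (hj : 1 ≤ j) :
    riemannZeta (2 * (j:ℂ)) = ((∑' m : ℕ, 1 / ((m:ℝ) + 1) ^ (2*j) : ℝ) : ℂ) := by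
  have hcast : (2 * (j:ℂ)) = ((2*j : ℕ) : ℂ) := by push_cast; ring
  rw [hcast, zeta_nat_eq_tsum_of_gt_one (by omega : 1 < 2*j)]
  have hsummable : Summable (fun n : ℕ => 1 / (n:ℝ) ^ (2*j)) :=
    Real.summable_one_div_nat_pow.mpr (by omega)
  have hshift : (∑' n : ℕ, 1 / (n:ℝ) ^ (2*j)) = ∑' m : ℕ, 1 / ((m:ℝ) + 1) ^ (2*j) := by
    rw [hsummable.tsum_eq_zero_add]
    have h0 : (1:ℝ) / (0:ℕ) ^ (2*j) = 0 := by
      rw [Nat.cast_zero, zero_pow (by omega : 2*j ≠ 0), div_zero]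
    rw [h0, zero_add]
    exact tsum_congr fun m => by push_cast; ring_nf
  rw [← hshift, Complex.ofReal_tsum]
  exact tsum_congr fun n => by push_cast; ring_nf

end SumZetaAux

open SumZetaAux

/-- For all positive integers `k` and `n`,
`∑_{j=1}^{k} (2πi n)^{-2j} ζ(2j)/(2k-2j)!
  = ((2πn)^{-2k}/(2(2k)!)) ∫₀¹ (-2(2πn)^{2k} + (2πn - i log u)^{2k} + (2πn + i log u)^{2k})/(1-u)² du`. -/
theorem sum_zeta_even_integral (k n : ℕ) (hk : 0 < k) (hn : 0 < n) :
    ∑ j ∈ Finset.Icc 1 k,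
        (2 * (Real.pi : ℂ) * Complex.I * n) ^ (-(2 * j : ℤ)) * riemannZeta (2 * j) /
          (Nat.factorial (2 * k - 2 * j) : ℂ) =
      (2 * (Real.pi : ℂ) * n) ^ (-(2 * k : ℤ)) / (2 * (Nat.factorial (2 * k) : ℂ)) *
        ∫ u in (0:ℝ)..1,
          (-2 * (2 * (Real.pi : ℂ) * n) ^ (2 * k) +
              (2 * (Real.pi : ℂ) * n - Complex.I * Real.log u) ^ (2 * k) +
              (2 * (Real.pi : ℂ) * n + Complex.I * Real.log u) ^ (2 * k)) /
            (1 - (u : ℂ)) ^ 2 := by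
  set aC : ℂ := 2 * (Real.pi : ℂ) * n with haC
  have haC0 : aC ≠ 0 := by
    rw [haC]
    have : (n:ℂ) ≠ 0 := Nat.cast_ne_zero.mpr hn.ne'
    have hpi : (Real.pi : ℂ) ≠ 0 := Complex.ofReal_ne_zero.mpr Real.pi_ne_zero
    simp [this, hpi]
  -- Step 1: rewrite the integral as a set integral over Ioo and expand integrand
  have hstep1 : (∫ u in (0:ℝ)..1,
          (-2 * aC ^ (2 * k) + (aC - Complex.I * Real.log u) ^ (2 * k) +
              (aC + Complex.I * Real.log u) ^ (2 * k)) / (1 - (u : ℂ)) ^ 2)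
      = ∑ r ∈ Finset.Icc 1 k,
          (2 * (Nat.choose (2*k) (2*r) : ℂ) * aC ^ (2*k - 2*r) * (-1:ℂ) ^ r)
            * ((∫ u in Set.Ioo (0:ℝ) 1, gg (2*r) u : ℝ) : ℂ) := by
    rw [intervalIntegral.integral_of_le zero_le_one,
      MeasureTheory.integral_Ioc_eq_integral_Ioo]
    have hcongr : ∀ u ∈ Set.Ioo (0:ℝ) 1,
        (-2 * aC ^ (2 * k) + (aC - Complex.I * Real.log u) ^ (2 * k) +
            (aC + Complex.I * Real.log u) ^ (2 * k)) / (1 - (u : ℂ)) ^ 2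
        = ∑ r ∈ Finset.Icc 1 k,
            (2 * (Nat.choose (2*k) (2*r) : ℂ) * aC ^ (2*k - 2*r) * (-1:ℂ) ^ r)
              * ((gg (2*r) u : ℝ) : ℂ) := by
      intro u hu
      rw [binom_even k aC (Complex.I * Real.log u), Finset.sum_div]
      refine Finset.sum_congr rfl fun r hr => ?_
      unfold gg
      have hIlog : (Complex.I * (Real.log u : ℂ)) ^ (2*r)
          = (-1:ℂ) ^ r * ((Real.log u : ℂ)) ^ (2*r) := by
        rw [mul_pow, pow_mul, Complex.I_sq]
      have hneg : ((-Real.log u : ℝ) : ℂ) ^ (2*r) = ((Real.log u : ℝ) : ℂ) ^ (2*r) := by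
        push_cast
        exact Even.neg_pow ⟨r, by omega⟩ _
      push_cast
      rw [hIlog]
      rw [show ((-Real.log u : ℝ) : ℂ) = -(Real.log u : ℂ) by push_cast; ring] at hneg
      rw [hneg]
      ring
    rw [setIntegral_congr_fun measurableSet_Ioo hcongr]
    rw [MeasureTheory.integral_finset_sum _ (fun r hr => ?_)]
    · refine Finset.sum_congr rfl fun r hr => ?_
      rw [MeasureTheory.integral_const_mul]
      congr 1
      exact integral_ofReal
    · have hint : IntegrableOn (gg (2*r)) (Set.Ioo (0:ℝ) 1) :=
        gg_integrableOn (2*r) (by simp only [Finset.mem_Icc] at hr; omega)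
      exact (hint.ofReal.const_mul _)
  rw [hstep1, Finset.mul_sum]
  refine Finset.sum_congr rfl fun j hj => ?_
  simp only [Finset.mem_Icc] at hj
  obtain ⟨hj1, hjk⟩ := hj
  -- rewrite zeta and the integral value
  have hzeta : riemannZeta (2 * (j:ℂ)) = ((∑' m : ℕ, 1 / ((m:ℝ) + 1) ^ (2*j) : ℝ) : ℂ) :=
    zeta_eq j hj1
  rw [show ((2 : ℂ) * (j:ℕ)) = 2 * (j:ℂ) by push_cast; ring, hzeta,
    gg_integral (2*j) (by omega)]
  set S : ℝ := ∑' m : ℕ, 1 / ((m:ℝ) + 1) ^ (2*j) with hS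
  -- powers of I
  have hIpow : (2 * (Real.pi : ℂ) * Complex.I * n) ^ (-(2 * (j:ℤ)))
      = aC ^ (-(2 * (j:ℤ))) * (-1:ℂ) ^ j := by
    rw [show (2 * (Real.pi : ℂ) * Complex.I * n) = aC * Complex.I by rw [haC]; ring,
      mul_zpow]
    congr 1
    rw [show (-(2 * (j:ℤ))) = -((2*j : ℕ) : ℤ) by push_cast; ring, zpow_neg, zpow_natCast,
      pow_mul, Complex.I_sq]
    rw [inv_eq_one_div]
    rcases Nat.even_or_odd j with he | ho
    · rw [he.neg_one_pow]; norm_num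
    · rw [ho.neg_one_pow]; norm_num
  -- zpow combination
  have hzpow : aC ^ (-(2 * (k:ℤ))) * aC ^ ((2*k - 2*j : ℕ)) = aC ^ (-(2 * (j:ℤ))) := by
    rw [← zpow_natCast aC (2*k - 2*j), ← zpow_add₀ haC0]
    congr 1
    push_cast [Nat.cast_sub (by omega : 2*j ≤ 2*k)]
    ring
  -- factorial identity
  have hfact : ((Nat.factorial (2*k)) : ℂ)
      = (Nat.choose (2*k) (2*j) : ℂ) * (Nat.factorial (2*j) : ℂ) * (Nat.factorial (2*k - 2*j) : ℂ) := by
    exact_mod_cast (Nat.choose_mul_factorial_mul_factorial (by omega : 2*j ≤ 2*k)).symm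
  have hC0 : (Nat.choose (2*k) (2*j) : ℂ) ≠ 0 :=
    Nat.cast_ne_zero.mpr (Nat.choose_pos (by omega : 2*j ≤ 2*k)).ne'
  have hf1 : (Nat.factorial (2*j) : ℂ) ≠ 0 := Nat.cast_ne_zero.mpr (Nat.factorial_pos _).ne'
  have hf2 : (Nat.factorial (2*k - 2*j) : ℂ) ≠ 0 := Nat.cast_ne_zero.mpr (Nat.factorial_pos _).ne'
  push_cast
  rw [hIpow]
  have hden : (2:ℂ) * (Nat.factorial (2*k) : ℂ) ≠ 0 := by
    have h2 : ((Nat.factorial (2*k) : ℂ)) ≠ 0 := Nat.cast_ne_zero.mpr (Nat.factorial_pos _).ne'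
    simp [h2]
  rw [← hzpow, div_mul_eq_mul_div, div_eq_div_iff hf2 hden, hfact]
  ring
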